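/- The identification of Laplace transforms: for all λ > 0, μ > 0, x > 0 and δ ≥ 0, ∫₀^x ((δ+2)μ/(2μm+1)^{2+δ/2}) · ((1+2(x-m)λ)/(1+2λx))^{δ/2} dm = ((2λx+1)μ/((2λx+1)μ+λ)) - 1/((2μx+1)^{1+δ/2}·(1+λ(2μx+1)/μ)·(1+2λx)^{δ/2}). -/

import Mathlib

/-- For all `λ, μ, x > 0` and `δ ≥ 0`:
`∫₀^x ((δ+2)μ/(2μm+1)^{2+δ/2}) ((1+2(x-m)λ)/(1+2λx))^{δ/2} dm`
`= (2λx+1)μ/((2λx+1)μ+λ) - 1/((2μx+1)^{1+δ/2} (1+λ(2μx+1)/μ) (1+2λx)^{δ/2})`. -/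
theorem laplace_transform_integral_identity (lam mu x δ : ℝ) (hlam : 0 < lam)
    (hmu : 0 < mu) (hx : 0 < x) (hδ : 0 ≤ δ) :
    ∫ m in (0:ℝ)..x,
        ((δ + 2) * mu / (2 * mu * m + 1) ^ (2 + δ / 2))
          * ((1 + 2 * (x - m) * lam) / (1 + 2 * lam * x)) ^ (δ / 2)
      = (2 * lam * x + 1) * mu / ((2 * lam * x + 1) * mu + lam)
          - 1 / ((2 * mu * x + 1) ^ (1 + δ / 2) * (1 + lam * (2 * mu * x + 1) / mu)
              * (1 + 2 * lam * x) ^ (δ / 2)) := by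
  set s := δ / 2 with hs
  have hs0 : 0 ≤ s := by positivity
  have hD : (0:ℝ) < 1 + 2*lam*x := by positivity
  have hP : (0:ℝ) < lam + mu + 2*lam*mu*x := by positivity
  have hDs : (0:ℝ) < (1 + 2*lam*x) ^ s := Real.rpow_pos_of_pos hD s
  set c : ℝ := -(mu / ((lam + mu + 2*lam*mu*x) * (1 + 2*lam*x) ^ s)) with hc
  set F : ℝ → ℝ := fun m => c * ((1 + 2*lam*(x - m)) ^ (1+s) / (2*mu*m + 1) ^ (1+s)) with hF
  have key : ∀ m ∈ Set.uIcc (0:ℝ) x, HasDerivAt F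
      (((δ + 2) * mu / (2 * mu * m + 1) ^ (2 + s))
        * ((1 + 2 * (x - m) * lam) / (1 + 2 * lam * x)) ^ s) m := by
    intro m hm
    rw [Set.uIcc_of_le hx.le] at hm
    obtain ⟨hm0, hmx⟩ := hm
    have hA : (0:ℝ) < 1 + 2*lam*(x - m) := by nlinarith
    have hB : (0:ℝ) < 2*mu*m + 1 := by nlinarith
    have hAs := Real.rpow_pos_of_pos hA s
    have hBs := Real.rpow_pos_of_pos hB s
    have h1 : HasDerivAt (fun m : ℝ => 1 + 2*lam*(x - m)) (-(2*lam)) m := by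
      simpa using (((hasDerivAt_id m).const_sub x).const_mul (2*lam)).const_add 1
    have h2 : HasDerivAt (fun m : ℝ => 2*mu*m + 1) (2*mu) m := by
      simpa using ((hasDerivAt_id m).const_mul (2*mu)).add_const 1
    have hA' : HasDerivAt (fun m => (1 + 2*lam*(x - m)) ^ (1+s))
        (-(2*lam*(1+s)*(1 + 2*lam*(x - m)) ^ s)) m := by
      have := h1.rpow_const (p := 1+s) (Or.inl hA.ne')
      simpa [show (1+s) - 1 = s by ring] using this
    have hB' : HasDerivAt (fun m => (2*mu*m + 1) ^ (1+s))
        (2*mu*(1+s)*(2*mu*m + 1) ^ s) m := by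
      have := h2.rpow_const (p := 1+s) (Or.inl hB.ne')
      simpa [show (1+s) - 1 = s by ring] using this
    have hBne : ((2*mu*m + 1:ℝ)) ^ (1+s) ≠ 0 := (Real.rpow_pos_of_pos hB _).ne'
    have := ((hA'.div hB' hBne).const_mul c)
    convert this using 1
    case e'_4 => rfl
    case e'_5 => rfl
    case e'_8 => rfl
    have e1 : ((1 + 2*lam*(x - m)):ℝ) ^ (1+s) = (1 + 2*lam*(x - m)) * (1 + 2*lam*(x - m)) ^ s := by
      rw [Real.rpow_add hA, Real.rpow_one]
    have e2 : ((2*mu*m + 1:ℝ)) ^ (1+s) = (2*mu*m + 1) * (2*mu*m + 1) ^ s := by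
      rw [Real.rpow_add hB, Real.rpow_one]
    have e3 : ((2*mu*m + 1:ℝ)) ^ (2+s) = (2*mu*m + 1) * ((2*mu*m + 1) * (2*mu*m + 1) ^ s) := by
      rw [show (2:ℝ)+s = 1 + (1+s) by ring, Real.rpow_add hB, Real.rpow_one, e2]
    have e4 : ((1 + 2*(x - m)*lam) / (1 + 2*lam*x)) ^ s
        = (1 + 2*lam*(x - m)) ^ s / (1 + 2*lam*x) ^ s := by
      rw [show (1 + 2*(x-m)*lam) = 1 + 2*lam*(x-m) by ring, Real.div_rpow hA.le hD.le]
    have e5 : δ = 2*s := by rw [hs]; ring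
    rw [e3, e4, e5, hc, e1, e2]
    field_simp
    ring
  have hcont : IntervalIntegrable (fun m =>
      ((δ + 2) * mu / (2 * mu * m + 1) ^ (2 + s))
        * ((1 + 2 * (x - m) * lam) / (1 + 2 * lam * x)) ^ s) MeasureTheory.volume 0 x := by
    apply ContinuousOn.intervalIntegrable
    apply ContinuousOn.mul
    · apply ContinuousOn.div continuousOn_const
      · apply ContinuousOn.rpow_const
        · exact ((continuous_const.mul continuous_id).add continuous_const).continuousOn
        · intro m hm
          rw [Set.uIcc_of_le hx.le] at hm
          have hB : (0:ℝ) < 2*mu*m + 1 := by nlinarith [hm.1]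
          exact Or.inl hB.ne'
      · intro m hm
        rw [Set.uIcc_of_le hx.le] at hm
        have hB : (0:ℝ) < 2*mu*m + 1 := by nlinarith [hm.1]
        exact (Real.rpow_pos_of_pos hB _).ne'
    · apply ContinuousOn.rpow_const
      · exact (Continuous.div_const (by continuity) _).continuousOn
      · intro m hm
        rw [Set.uIcc_of_le hx.le] at hm
        have hA : (0:ℝ) < 1 + 2*(x - m)*lam := by nlinarith [hm.2]
        exact Or.inl (by positivity)
  have := intervalIntegral.integral_eq_sub_of_hasDerivAt key hcont
  rw [this]
  have e0 : F x - F 0 = c / (2*mu*x + 1) ^ (1+s) - c * ((1 + 2*lam*x) ^ (1+s)) := by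
    simp [hF, Real.one_rpow]
    ring
  rw [e0, hc]
  have hBx : (0:ℝ) < 2*mu*x + 1 := by positivity
  have e2 : ((1 + 2*lam*x:ℝ)) ^ (1+s) = (1 + 2*lam*x) * (1 + 2*lam*x) ^ s := by
    rw [Real.rpow_add hD, Real.rpow_one]
  have e3 : ((2*mu*x + 1:ℝ)) ^ (1+s) = (2*mu*x + 1) ^ (1+s) := rfl
  have hBxs : (0:ℝ) < (2*mu*x + 1) ^ (1+s) := Real.rpow_pos_of_pos hBx _
  rw [e2]
  have h5 : (2 * mu * x + 1:ℝ) ^ (1 + s) = (2 * mu * x + 1) ^ (1 + δ/2) := by rw [hs]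
  field_simp
  ring
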